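/- Let a, b ∈ ℕ with b ≥ 1. On ℝ² × ℝ² with variables (x, y; ξ, η), consider the three symbols X₁(x, y, ξ, η) = ξ, X₂(x, y, ξ, η) = x^{2a+1}·η, X₃(x, y, ξ, η) = x^{a}·y^{b}·η, and the point ρ = ((0,0); (0,1)). Then the type of the family (X₁, X₂, X₃) at ρ equals 2a + 2, i.e. τ(ρ; X) = 2a + 2. -/

import Mathlib

/-- Poisson bracket of functions on `ℝ² × ℝ²` in the variables `((x,y), (ξ,η))`. -/
noncomputable def poissonBracket
    (q₁ q₂ : EuclideanSpace ℝ (Fin 2) × EuclideanSpace ℝ (Fin 2) → ℝ) :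
    EuclideanSpace ℝ (Fin 2) × EuclideanSpace ℝ (Fin 2) → ℝ :=
  fun z => ∑ j : Fin 2,
    (fderiv ℝ q₁ z (0, EuclideanSpace.single j 1) *
        fderiv ℝ q₂ z (EuclideanSpace.single j 1, 0) -
      fderiv ℝ q₁ z (EuclideanSpace.single j 1, 0) *
        fderiv ℝ q₂ z (0, EuclideanSpace.single j 1))

/-- Iterated Poisson bracket `f^I` for the index sequence `(i, I₁, …, I_s)`. -/
noncomputable def iterBracket {S : Type*}
    (f : S → (EuclideanSpace ℝ (Fin 2) × EuclideanSpace ℝ (Fin 2) → ℝ))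
    (i : S) (I : List S) :
    EuclideanSpace ℝ (Fin 2) × EuclideanSpace ℝ (Fin 2) → ℝ :=
  I.foldl (fun g j => poissonBracket g (f j)) (f i)

/-- The type `τ(z)` of a finite family of symbols at a point `z`. -/
noncomputable def familyType {S : Type*}
    (f : S → (EuclideanSpace ℝ (Fin 2) × EuclideanSpace ℝ (Fin 2) → ℝ))
    (z : EuclideanSpace ℝ (Fin 2) × EuclideanSpace ℝ (Fin 2)) : ℕ∞ :=
  sInf {m : ℕ∞ | ∃ (i : S) (I : List S),
    iterBracket f i I z ≠ 0 ∧ m = ((I.length + 1 : ℕ) : ℕ∞)}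

noncomputable section TypeXAux

local notation "E" => EuclideanSpace ℝ (Fin 2)
local notation "Z" => (EuclideanSpace ℝ (Fin 2) × EuclideanSpace ℝ (Fin 2))

abbrev Pol := List (ℝ × ℕ × ℕ)

def evalP (l : Pol) (x y : ℝ) : ℝ := (l.map fun t => t.1 * x ^ t.2.1 * y ^ t.2.2).sum
def FF (l : Pol) : Z → ℝ := fun z => evalP l (z.1 0) (z.1 1) * z.2 1
def dxP (l : Pol) : Pol := l.map fun t => (t.1 * (t.2.1 : ℝ), t.2.1 - 1, t.2.2)
def dyP (l : Pol) : Pol := l.map fun t => (t.1 * (t.2.2 : ℝ), t.2.1, t.2.2 - 1)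
def negP (l : Pol) : Pol := l.map fun t => (-t.1, t.2)
def mulP (l q : Pol) : Pol :=
  l.flatMap fun t => q.map fun s => (t.1 * s.1, t.2.1 + s.2.1, t.2.2 + s.2.2)
def brP (l q : Pol) : Pol := mulP l (dyP q) ++ negP (mulP q (dyP l))

@[simp] lemma evalP_nil (x y : ℝ) : evalP ([] : Pol) x y = 0 := rfl
@[simp] lemma evalP_cons (t : ℝ × ℕ × ℕ) (l : Pol) (x y : ℝ) :
    evalP (t :: l) x y = t.1 * x ^ t.2.1 * y ^ t.2.2 + evalP l x y := rfl
@[simp] lemma evalP_append (l q : Pol) (x y : ℝ) :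
    evalP (l ++ q) x y = evalP l x y + evalP q x y := by
  simp [evalP, List.map_append (α := ℝ × ℕ × ℕ)]
@[simp] lemma evalP_neg (l : Pol) (x y : ℝ) : evalP (negP l) x y = -evalP l x y := by
  induction l with
  | nil => simp [negP]
  | cons t l ih =>
    have : negP (t :: l) = (-t.1, t.2) :: negP l := rfl
    rw [this, evalP_cons, evalP_cons, ih]; ring
lemma evalP_mapmul (t : ℝ × ℕ × ℕ) (q : Pol) (x y : ℝ) :
    evalP (q.map fun s => (t.1 * s.1, t.2.1 + s.2.1, t.2.2 + s.2.2)) x y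
      = (t.1 * x ^ t.2.1 * y ^ t.2.2) * evalP q x y := by
  induction q with
  | nil => simp
  | cons s q ihq =>
    have h : (List.map (fun s => (t.1 * s.1, t.2.1 + s.2.1, t.2.2 + s.2.2)) (s :: q) : Pol)
        = (t.1 * s.1, t.2.1 + s.2.1, t.2.2 + s.2.2) :: q.map
          (fun s => (t.1 * s.1, t.2.1 + s.2.1, t.2.2 + s.2.2)) := rfl
    rw [h, evalP_cons, ihq, evalP_cons]
    simp only [pow_add]; ring

@[simp] lemma evalP_mul (l q : Pol) (x y : ℝ) :
    evalP (mulP l q) x y = evalP l x y * evalP q x y := by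
  induction l with
  | nil => simp [mulP]
  | cons t l ih =>
    have h1 : mulP (t :: l) q =
        (q.map fun s => (t.1 * s.1, t.2.1 + s.2.1, t.2.2 + s.2.2)) ++ mulP l q := rfl
    rw [h1, evalP_append, ih, evalP_cons, evalP_mapmul]
    ring

def Lx : Z →L[ℝ] ℝ := (EuclideanSpace.proj (0 : Fin 2)).comp
  (ContinuousLinearMap.fst ℝ (EuclideanSpace ℝ (Fin 2)) (EuclideanSpace ℝ (Fin 2)))
def Ly : Z →L[ℝ] ℝ := (EuclideanSpace.proj (1 : Fin 2)).comp
  (ContinuousLinearMap.fst ℝ (EuclideanSpace ℝ (Fin 2)) (EuclideanSpace ℝ (Fin 2)))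
def Lxi : Z →L[ℝ] ℝ := (EuclideanSpace.proj (0 : Fin 2)).comp
  (ContinuousLinearMap.snd ℝ (EuclideanSpace ℝ (Fin 2)) (EuclideanSpace ℝ (Fin 2)))
def Leta : Z →L[ℝ] ℝ := (EuclideanSpace.proj (1 : Fin 2)).comp
  (ContinuousLinearMap.snd ℝ (EuclideanSpace ℝ (Fin 2)) (EuclideanSpace ℝ (Fin 2)))

@[simp] lemma Lx_apply (v : Z) : Lx v = v.1 0 := rfl
@[simp] lemma Ly_apply (v : Z) : Ly v = v.1 1 := rfl
@[simp] lemma Lxi_apply (v : Z) : Lxi v = v.2 0 := rfl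
@[simp] lemma Leta_apply (v : Z) : Leta v = v.2 1 := rfl

lemma myPow {f : Z → ℝ} {f' : Z →L[ℝ] ℝ} {z : Z} (h : HasFDerivAt f f' z) (n : ℕ) :
    HasFDerivAt (fun y => f y ^ n) (((n : ℝ) * f z ^ (n - 1)) • f') z := by
  induction n with
  | zero => simpa using hasFDerivAt_const (1 : ℝ) z
  | succ n ih =>
    have h2 := ih.mul h
    have heq : (f z ^ n) • f' + f z • (((n : ℝ) * f z ^ (n - 1)) • f')
        = (((n + 1 : ℕ) : ℝ) * f z ^ (n + 1 - 1)) • f' := by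
      rw [smul_smul, ← add_smul]
      congr 1
      cases n with
      | zero => simp
      | succ k => push_cast; ring
    exact heq ▸ (by
      have hf : (fun y => f y ^ (n + 1)) = (fun y => f y ^ n) * f := funext fun y => pow_succ (f y) n
      rw [hf]; exact h2)

def DD (l : Pol) (z : Z) : Z →L[ℝ] ℝ :=
  (evalP (dxP l) (z.1 0) (z.1 1) * z.2 1) • Lx +
  (evalP (dyP l) (z.1 0) (z.1 1) * z.2 1) • Ly +
  (evalP l (z.1 0) (z.1 1)) • Leta

lemma hasFDerivAt_FF (l : Pol) (z : Z) : HasFDerivAt (FF l) (DD l z) z := by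
  induction l with
  | nil =>
    have h1 : FF ([] : Pol) = fun _ => (0 : ℝ) := funext fun z => by simp [FF]
    have h2 : DD ([] : Pol) z = 0 := by
      refine ContinuousLinearMap.ext fun v => ?_
      simp [DD, dxP, dyP]
    rw [h1, h2]; exact hasFDerivAt_const 0 z
  | cons t l ih =>
    have hx : HasFDerivAt (fun z : Z => z.1 0) Lx z := Lx.hasFDerivAt
    have hy : HasFDerivAt (fun z : Z => z.1 1) Ly z := Ly.hasFDerivAt
    have heta : HasFDerivAt (fun z : Z => z.2 1) Leta z := Leta.hasFDerivAt
    have hmono := (((myPow hx t.2.1).const_mul t.1).mul (myPow hy t.2.2)).mul heta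
    have hsum := hmono.add ih
    have hfun : (fun z : Z => t.1 * (z.1 0) ^ t.2.1 * (z.1 1) ^ t.2.2 * z.2 1 + FF l z)
        = FF (t :: l) := by
      funext w; simp [FF]; ring
    have hD : (t.1 * (z.1 0) ^ t.2.1 * (z.1 1) ^ t.2.2) • Leta +
          (z.2 1) • ((t.1 * (z.1 0) ^ t.2.1) • (((t.2.2 : ℝ) * (z.1 1) ^ (t.2.2 - 1)) • Ly) +
            ((z.1 1) ^ t.2.2) • (t.1 • (((t.2.1 : ℝ) * (z.1 0) ^ (t.2.1 - 1)) • Lx))) +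
          DD l z = DD (t :: l) z := by
      refine ContinuousLinearMap.ext fun v => ?_
      have e1 : evalP (dxP (t :: l)) = evalP ((t.1 * (t.2.1 : ℝ), t.2.1 - 1, t.2.2) :: dxP l) := rfl
      have e2 : evalP (dyP (t :: l)) = evalP ((t.1 * (t.2.2 : ℝ), t.2.1, t.2.2 - 1) :: dyP l) := rfl
      simp [DD, e1, e2]
      ring
    exact hfun ▸ hD ▸ hsum

lemma fderiv_FF (l : Pol) (z v : Z) :
    fderiv ℝ (FF l) z v =
      evalP (dxP l) (z.1 0) (z.1 1) * z.2 1 * v.1 0 +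
      evalP (dyP l) (z.1 0) (z.1 1) * z.2 1 * v.1 1 +
      evalP l (z.1 0) (z.1 1) * v.2 1 := by
  rw [(hasFDerivAt_FF l z).fderiv]
  simp [DD]

lemma fderiv_xi (z v : Z) : fderiv ℝ (fun z : Z => z.2 0) z v = v.2 0 := by
  have : HasFDerivAt (fun z : Z => z.2 0) Lxi z := Lxi.hasFDerivAt
  rw [this.fderiv]; rfl

lemma pb_FF_FF (l q : Pol) : poissonBracket (FF l) (FF q) = FF (brP l q) := by
  funext z
  simp only [poissonBracket, Fin.sum_univ_two, fderiv_FF]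
  simp [FF, brP, EuclideanSpace.single_apply]
  ring

lemma pb_FF_xi (l : Pol) :
    poissonBracket (FF l) (fun z : Z => z.2 0) = FF (negP (dxP l)) := by
  funext z
  simp only [poissonBracket, Fin.sum_univ_two, fderiv_FF, fderiv_xi]
  simp [FF, EuclideanSpace.single_apply]

lemma pb_xi_FF (q : Pol) :
    poissonBracket (fun z : Z => z.2 0) (FF q) = FF (dxP q) := by
  funext z
  simp only [poissonBracket, Fin.sum_univ_two, fderiv_FF, fderiv_xi]
  simp [FF, EuclideanSpace.single_apply]

lemma pb_xi_xi :
    poissonBracket (fun z : Z => z.2 0) (fun z : Z => z.2 0) = fun _ => (0 : ℝ) := by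
  funext z
  simp only [poissonBracket, Fin.sum_univ_two, fderiv_xi]
  simp [EuclideanSpace.single_apply]

lemma pb_zero_left (g : Z → ℝ) :
    poissonBracket (fun _ => (0 : ℝ)) g = fun _ => (0 : ℝ) := by
  funext z
  simp [poissonBracket, fderiv_const]


def wOK (a k : ℕ) (l : Pol) : Prop :=
  ∀ t ∈ l, t.1 ≠ (0 : ℝ) → k ≤ t.2.1 + (a + 1) * t.2.2

lemma wOK_mono {a k k' : ℕ} {l : Pol} (h : k' ≤ k) (hw : wOK a k l) : wOK a k' l :=
  fun t ht hc => le_trans h (hw t ht hc)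

lemma wOK_append {a k : ℕ} {l q : Pol} (hl : wOK a k l) (hq : wOK a k q) :
    wOK a k (l ++ q) := by
  intro t ht hc
  rcases List.mem_append.1 ht with h | h
  · exact hl t h hc
  · exact hq t h hc

lemma wOK_neg {a k : ℕ} {l : Pol} (hl : wOK a k l) : wOK a k (negP l) := by
  intro t ht hc
  rcases List.mem_map.1 ht with ⟨s, hs, rfl⟩
  exact hl s hs (by simpa using hc)

lemma wOK_dx {a k : ℕ} {l : Pol} (hl : wOK a k l) : wOK a (k - 1) (dxP l) := by
  intro t ht hc
  rcases List.mem_map.1 ht with ⟨s, hs, rfl⟩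
  have hc' : s.1 ≠ 0 := fun h => hc (by simp [h])
  have := hl s hs hc'
  simp only at *
  omega

lemma wOK_dy {a k : ℕ} {l : Pol} (hl : wOK a k l) : wOK a (k - (a + 1)) (dyP l) := by
  intro t ht hc
  rcases List.mem_map.1 ht with ⟨s, hs, rfl⟩
  have hc' : s.1 ≠ 0 := fun h => hc (by simp [h])
  have h1 := hl s hs hc'
  obtain ⟨c, m, n⟩ := s
  simp only at *
  cases n with
  | zero => simp at h1 ⊢; omega
  | succ n' =>
    have e : (a + 1) * (n' + 1) = (a + 1) * n' + (a + 1) := by ring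
    rw [e] at h1
    simpa using by omega

lemma wOK_mul {a k k' : ℕ} {l q : Pol} (hl : wOK a k l) (hq : wOK a k' q) :
    wOK a (k + k') (mulP l q) := by
  intro t ht hc
  rcases List.mem_flatMap.1 ht with ⟨s, hs, ht'⟩
  rcases List.mem_map.1 ht' with ⟨u, hu, rfl⟩
  have hc1 : s.1 ≠ 0 := fun h => hc (by simp [h])
  have hc2 : u.1 ≠ 0 := fun h => hc (by simp [h])
  have h1 := hl s hs hc1
  have h2 := hq u hu hc2
  simp only at *
  have e : (a + 1) * (s.2.2 + u.2.2) = (a + 1) * s.2.2 + (a + 1) * u.2.2 := by ring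
  rw [e]
  omega

lemma wOK_br {a k : ℕ} {l q : Pol} (hl : wOK a k l) (hq : wOK a (2 * a + 1) q) :
    wOK a (k - 1) (brP l q) := by
  refine wOK_append (wOK_mono ?_ (wOK_mul hl (wOK_dy hq)))
    (wOK_neg (wOK_mono ?_ (wOK_mul hq (wOK_dy hl)))) <;> omega

lemma evalP_zero {a k : ℕ} {l : Pol} (hl : wOK a k l) (hk : 1 ≤ k) :
    evalP l 0 0 = 0 := by
  induction l with
  | nil => simp
  | cons t l ih =>
    rw [evalP_cons, ih (fun s hs => hl s (List.mem_cons_of_mem _ hs))]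
    by_cases hc : t.1 = 0
    · simp [hc]
    · have h1 := hl t List.mem_cons_self hc
      rcases Nat.eq_zero_or_pos t.2.1 with hm | hm
      · rcases Nat.eq_zero_or_pos t.2.2 with hn | hn
        · exfalso; rw [hm, hn] at h1; simp at h1; omega
        · simp [zero_pow (Nat.pos_iff_ne_zero.1 hn)]
      · simp [zero_pow (Nat.pos_iff_ne_zero.1 hm)]


section Main

variable {a b : ℕ} {X : Fin 3 → (EuclideanSpace ℝ (Fin 2) × EuclideanSpace ℝ (Fin 2)) → ℝ}

def p1 (a : ℕ) : Pol := [(1, 2 * a + 1, 0)]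
def p2 (a b : ℕ) : Pol := [(1, a, b)]

lemma X0_eq (hX0 : ∀ z, X 0 z = z.2 0) : X 0 = fun z : Z => z.2 0 := funext hX0

lemma X1_eq (hX1 : ∀ z, X 1 z = (z.1 0) ^ (2 * a + 1) * z.2 1) : X 1 = FF (p1 a) :=
  funext fun z => by simp [FF, p1, hX1 z, evalP]

lemma X2_eq (hX2 : ∀ z, X 2 z = (z.1 0) ^ a * (z.1 1) ^ b * z.2 1) : X 2 = FF (p2 a b) :=
  funext fun z => by simp [FF, p2, hX2 z, evalP]

lemma wOK_p1 : wOK a (2 * a + 1) (p1 a) := by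
  intro t ht hc
  simp [p1] at ht
  subst ht
  simp

lemma wOK_p2 (hb : 1 ≤ b) : wOK a (2 * a + 1) (p2 a b) := by
  intro t ht hc
  simp [p2] at ht
  subst ht
  simp only
  have h : a + 1 ≤ (a + 1) * b := Nat.le_mul_of_pos_right (a + 1) hb
  omega

lemma step_FF (hX0 : ∀ z, X 0 z = z.2 0)
    (hX1 : ∀ z, X 1 z = (z.1 0) ^ (2 * a + 1) * z.2 1)
    (hX2 : ∀ z, X 2 z = (z.1 0) ^ a * (z.1 1) ^ b * z.2 1) (hb : 1 ≤ b)
    {k : ℕ} {l : Pol} (hl : wOK a k l) (j : Fin 3) :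
    ∃ l', wOK a (k - 1) l' ∧ poissonBracket (FF l) (X j) = FF l' := by
  fin_cases j
  · exact ⟨negP (dxP l), wOK_neg (wOK_dx hl), by
      show poissonBracket (FF l) (X 0) = FF (negP (dxP l))
      rw [X0_eq hX0, pb_FF_xi]⟩
  · exact ⟨brP l (p1 a), wOK_br hl wOK_p1, by
      show poissonBracket (FF l) (X 1) = FF (brP l (p1 a))
      rw [X1_eq hX1, pb_FF_FF]⟩
  · exact ⟨brP l (p2 a b), wOK_br hl (wOK_p2 hb), by
      show poissonBracket (FF l) (X 2) = FF (brP l (p2 a b))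
      rw [X2_eq hX2, pb_FF_FF]⟩

lemma fold_inv (hX0 : ∀ z, X 0 z = z.2 0)
    (hX1 : ∀ z, X 1 z = (z.1 0) ^ (2 * a + 1) * z.2 1)
    (hX2 : ∀ z, X 2 z = (z.1 0) ^ a * (z.1 1) ^ b * z.2 1) (hb : 1 ≤ b) :
    ∀ (I : List (Fin 3)) (g : Z → ℝ) (k : ℕ),
      ((∃ l, wOK a k l ∧ g = FF l) ∨ g = fun _ => 0) →
      (∃ l, wOK a (k - I.length) l ∧
          I.foldl (fun g j => poissonBracket g (X j)) g = FF l) ∨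
        I.foldl (fun g j => poissonBracket g (X j)) g = fun _ => 0 := by
  intro I
  induction I with
  | nil => intro g k h; simpa using h
  | cons j I ih =>
    intro g k h
    have hfold : (j :: I).foldl (fun g j => poissonBracket g (X j)) g
        = I.foldl (fun g j => poissonBracket g (X j)) (poissonBracket g (X j)) := rfl
    rw [hfold]
    rcases h with ⟨l, hl, rfl⟩ | rfl
    · obtain ⟨l', hl', heq⟩ := step_FF hX0 hX1 hX2 hb hl j
      rw [heq]
      have := ih (FF l') (k - 1) (Or.inl ⟨l', hl', rfl⟩)
      have hk : k - 1 - I.length = k - (j :: I).length := by simp; omega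
      rwa [hk] at this
    · rw [pb_zero_left]
      have := ih (fun _ => 0) (k - 1) (Or.inr rfl)
      have hk : k - 1 - I.length = k - (j :: I).length := by simp; omega
      rwa [hk] at this

lemma inv_main (hX0 : ∀ z, X 0 z = z.2 0)
    (hX1 : ∀ z, X 1 z = (z.1 0) ^ (2 * a + 1) * z.2 1)
    (hX2 : ∀ z, X 2 z = (z.1 0) ^ a * (z.1 1) ^ b * z.2 1) (hb : 1 ≤ b)
    (i : Fin 3) (I : List (Fin 3)) :
    iterBracket X i I = (fun z : Z => z.2 0) ∨
      (∃ l, wOK a (2 * a + 1 - I.length) l ∧ iterBracket X i I = FF l) ∨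
      iterBracket X i I = fun _ => 0 := by
  cases I with
  | nil =>
    fin_cases i
    · exact Or.inl (X0_eq hX0)
    · exact Or.inr (Or.inl ⟨p1 a, by simpa using (wOK_p1 : wOK a (2*a+1) (p1 a)), X1_eq hX1⟩)
    · exact Or.inr (Or.inl ⟨p2 a b, by simpa using wOK_p2 hb, X2_eq hX2⟩)
  | cons j I' =>
    right
    have hfold : iterBracket X i (j :: I')
        = I'.foldl (fun g j => poissonBracket g (X j)) (poissonBracket (X i) (X j)) := rfl
    have hstart : (∃ l, wOK a (2 * a) l ∧ poissonBracket (X i) (X j) = FF l) ∨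
        poissonBracket (X i) (X j) = fun _ => 0 := by
      fin_cases i
      · fin_cases j
        · exact Or.inr (by
            show poissonBracket (X 0) (X 0) = fun _ => (0 : ℝ)
            rw [X0_eq hX0, pb_xi_xi])
        · refine Or.inl ⟨dxP (p1 a), ?_, by
            show poissonBracket (X 0) (X 1) = FF (dxP (p1 a))
            rw [X0_eq hX0, X1_eq hX1, pb_xi_FF]⟩
          have := wOK_dx (wOK_p1 (a := a))
          simpa using this
        · refine Or.inl ⟨dxP (p2 a b), ?_, by
            show poissonBracket (X 0) (X 2) = FF (dxP (p2 a b))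
            rw [X0_eq hX0, X2_eq hX2, pb_xi_FF]⟩
          have := wOK_dx (wOK_p2 (a := a) hb)
          simpa using this
      · show (∃ l, wOK a (2 * a) l ∧ poissonBracket (X 1) (X j) = FF l) ∨
            poissonBracket (X 1) (X j) = fun _ => 0
        rw [X1_eq hX1]
        obtain ⟨l', hl', heq⟩ := step_FF hX0 hX1 hX2 hb (wOK_p1 (a := a)) j
        exact Or.inl ⟨l', by simpa using hl', heq⟩
      · show (∃ l, wOK a (2 * a) l ∧ poissonBracket (X 2) (X j) = FF l) ∨
            poissonBracket (X 2) (X j) = fun _ => 0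
        rw [X2_eq hX2]
        obtain ⟨l', hl', heq⟩ := step_FF hX0 hX1 hX2 hb (wOK_p2 (a := a) hb) j
        exact Or.inl ⟨l', by simpa using hl', heq⟩
    have := fold_inv hX0 hX1 hX2 hb I' _ (2 * a) hstart
    have hk : 2 * a - I'.length = 2 * a + 1 - (j :: I').length := by simp
    rw [hfold]
    rwa [hk] at this

lemma up_fold (hX0 : ∀ z, X 0 z = z.2 0) :
    ∀ (s m : ℕ) (c : ℝ), c ≠ 0 → s ≤ m →
      ∃ c' : ℝ, c' ≠ 0 ∧
        (List.replicate s (0 : Fin 3)).foldl (fun g j => poissonBracket g (X j))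
            (FF [(c, m, 0)])
          = FF [(c', m - s, 0)] := by
  intro s
  induction s with
  | zero => intro m c hc _; exact ⟨c, hc, by simp⟩
  | succ s ih =>
    intro m c hc hsm
    rw [List.replicate_succ]
    have hfold : (((0 : Fin 3) :: List.replicate s 0).foldl
          (fun g j => poissonBracket g (X j)) (FF [(c, m, 0)]))
        = (List.replicate s (0 : Fin 3)).foldl (fun g j => poissonBracket g (X j))
            (poissonBracket (FF [(c, m, 0)]) (X 0)) := rfl
    rw [hfold, X0_eq hX0, pb_FF_xi]
    have hne : -(c * (m : ℝ)) ≠ 0 := by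
      have : (m : ℝ) ≠ 0 := Nat.cast_ne_zero.2 (by omega)
      exact neg_ne_zero.2 (mul_ne_zero hc this)
    have hrepr : negP (dxP [(c, m, 0)]) = [(-(c * (m : ℝ)), m - 1, 0)] := rfl
    rw [hrepr]
    obtain ⟨c', hc', heq⟩ := ih (m - 1) (-(c * (m : ℝ))) hne (by omega)
    have he : m - 1 - s = m - (s + 1) := by omega
    rw [he] at heq
    exact ⟨c', hc', heq⟩

end Main

end TypeXAux

/-- For the symbols `X₁ = ξ`, `X₂ = x^{2a+1}η`, `X₃ = xᵃyᵇη` on `ℝ² × ℝ²` (`b ≥ 1`),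
the type of the family `(X₁, X₂, X₃)` at `ρ = ((0,0); (0,1))` equals `2a + 2`. -/
theorem type_X_eq_two_a_add_two
    (a b : ℕ) (hb : 1 ≤ b)
    (X : Fin 3 → (EuclideanSpace ℝ (Fin 2) × EuclideanSpace ℝ (Fin 2) → ℝ))
    (hX0 : ∀ z, X 0 z = z.2 0)
    (hX1 : ∀ z, X 1 z = (z.1 0) ^ (2 * a + 1) * z.2 1)
    (hX2 : ∀ z, X 2 z = (z.1 0) ^ a * (z.1 1) ^ b * z.2 1) :
    familyType X ((0 : EuclideanSpace ℝ (Fin 2)),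
        (EuclideanSpace.single 1 1 : EuclideanSpace ℝ (Fin 2))) =
      ((2 * a + 2 : ℕ) : ℕ∞) := by
  have hval : iterBracket X 1 (List.replicate (2 * a + 1) 0)
      ((0 : EuclideanSpace ℝ (Fin 2)),
        (EuclideanSpace.single 1 1 : EuclideanSpace ℝ (Fin 2))) ≠ 0 := by
    obtain ⟨c', hc', heq⟩ := up_fold hX0 (2 * a + 1) (2 * a + 1) 1 one_ne_zero le_rfl
    have h1 : iterBracket X 1 (List.replicate (2 * a + 1) 0)
        = (List.replicate (2 * a + 1) (0 : Fin 3)).foldl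
            (fun g j => poissonBracket g (X j)) (FF [(1, 2 * a + 1, 0)]) := by
      have : X 1 = FF (p1 a) := X1_eq hX1
      simp only [iterBracket, this, p1]
    rw [h1, heq]
    simp [FF, evalP, Nat.sub_self, EuclideanSpace.single_apply, hc']
  apply le_antisymm
  · apply sInf_le
    refine ⟨1, List.replicate (2 * a + 1) 0, hval, ?_⟩
    norm_num
    ring
  · apply le_sInf
    rintro m ⟨i, I, hne, rfl⟩
    refine Nat.cast_le.2 ?_
    by_contra hlt
    push_neg at hlt
    have hI : I.length ≤ 2 * a := by omega
    rcases inv_main hX0 hX1 hX2 hb i I with h | ⟨l, hl, h⟩ | h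
    · rw [h] at hne
      exact hne (by simp [EuclideanSpace.single_apply])
    · rw [h] at hne
      have h0 : evalP l 0 0 = 0 := evalP_zero hl (by omega)
      exact hne (by simp [FF, h0])
    · rw [h] at hne
      exact hne rfl
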